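/- Let (Ω, F, μ) be a probability space, 1 ≤ p ≤ ∞, φ : ℝ → ℝ a monotone Lipschitz function, and f ∈ L^∞(Ω, μ) real-valued. Then ‖φ∘f − E(φ∘f)‖_p ≤ Lip(φ)·‖f − E f‖_p. -/

import Mathlib

open MeasureTheory
open scoped ENNReal

private lemma bern {q : ℝ} (hq : 1 ≤ q) {x y : ℝ} (hx : 0 ≤ x) (hy : 0 ≤ y) :
    x ^ q + q * x ^ (q - 1) * (y - x) ≤ y ^ q := by
  rcases eq_or_lt_of_le hx with hx0 | hx0
  · rcases eq_or_lt_of_le hq with hq1 | hq1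
    · subst hq1
      simp [← hx0, Real.rpow_one, Real.rpow_zero]
    · rw [← hx0, Real.zero_rpow (by positivity), Real.zero_rpow (by linarith : q - 1 ≠ 0)]
      simpa using Real.rpow_nonneg hy q
  · have hs : -1 ≤ y / x - 1 := by
      have : 0 ≤ y / x := div_nonneg hy hx0.le
      linarith
    have B := one_add_mul_self_le_rpow_one_add hs hq
    have hxq : (0:ℝ) < x ^ q := Real.rpow_pos_of_pos hx0 q
    have hx1 : x ^ (q - 1) = x ^ q / x := Real.rpow_sub_one hx0.ne' q
    have e1 : x ^ q + q * x ^ (q - 1) * (y - x) = x ^ q * (1 + q * (y / x - 1)) := by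
      rw [hx1]; field_simp
    have e2 : x ^ q * (1 + (y / x - 1)) ^ q = y ^ q := by
      rw [add_sub_cancel, ← Real.mul_rpow hx0.le (div_nonneg hy hx0.le),
        mul_div_cancel₀ _ hx0.ne']
    calc x ^ q + q * x ^ (q - 1) * (y - x) = x ^ q * (1 + q * (y / x - 1)) := e1
      _ ≤ x ^ q * (1 + (y / x - 1)) ^ q := by
          exact mul_le_mul_of_nonneg_left B hxq.le
      _ = y ^ q := e2

private lemma psi_pos {q : ℝ} {a : ℝ} (ha : 0 < a) : a * |a| ^ (q - 2) = a ^ (q - 1) := by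
  have h2 : q - 2 + 1 = q - 1 := by ring
  rw [abs_of_pos ha, mul_comm, ← Real.rpow_add_one ha.ne', h2]

private lemma psi_neg {q : ℝ} {a : ℝ} (ha : a < 0) : a * |a| ^ (q - 2) = -((-a) ^ (q - 1)) := by
  have h2 : q - 2 + 1 = q - 1 := by ring
  rw [abs_of_neg ha, ← h2, Real.rpow_add_one (neg_ne_zero.mpr ha.ne)]
  ring

private lemma tangent {q : ℝ} (hq : 1 ≤ q) (a d : ℝ) :
    |a| ^ q + q * (a * |a| ^ (q - 2)) * (d - a) ≤ |d| ^ q := by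
  have hq0 : (0:ℝ) ≤ q := by linarith
  rcases lt_trichotomy a 0 with ha | ha | ha
  · rw [psi_neg ha, abs_of_neg ha]
    have c1 : 0 ≤ q * (-a) ^ (q - 1) := mul_nonneg hq0 (Real.rpow_nonneg (by linarith) _)
    have c2 : -d ≤ |d| := neg_le_abs d
    have hb := bern hq (by linarith : (0:ℝ) ≤ -a) (abs_nonneg d)
    nlinarith [mul_le_mul_of_nonneg_left (sub_le_sub_right c2 (-a)) c1]
  · subst ha
    simp only [abs_zero, zero_mul, mul_zero, zero_mul, sub_zero]
    rw [Real.zero_rpow (by positivity)]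
    simpa using Real.rpow_nonneg (abs_nonneg d) q
  · rw [psi_pos ha, abs_of_pos ha]
    have c1 : 0 ≤ q * a ^ (q - 1) := mul_nonneg hq0 (Real.rpow_nonneg ha.le _)
    have c2 : d ≤ |d| := le_abs_self d
    have hb := bern hq ha.le (abs_nonneg d)
    nlinarith [mul_le_mul_of_nonneg_left (sub_le_sub_right c2 a) c1]

private lemma psi_mono {q : ℝ} (hq : 1 ≤ q) :
    Monotone fun a : ℝ => a * |a| ^ (q - 2) := by
  intro a b hab
  have hq1 : (0:ℝ) ≤ q - 1 := by linarith
  rcases lt_or_ge b 0 with hb | hb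
  · have ha : a < 0 := lt_of_le_of_lt hab hb
    simp only [psi_neg ha, psi_neg hb]
    have := Real.rpow_le_rpow (by linarith : (0:ℝ) ≤ -b) (by linarith : -b ≤ -a) hq1
    linarith
  · rcases lt_or_ge 0 a with ha | ha
    · simp only [psi_pos ha, psi_pos (lt_of_lt_of_le ha hab)]
      exact Real.rpow_le_rpow ha.le hab hq1
    · have h1 : a * |a| ^ (q - 2) ≤ 0 :=
        mul_nonpos_of_nonpos_of_nonneg ha (Real.rpow_nonneg (abs_nonneg a) _)
      have h2 : 0 ≤ b * |b| ^ (q - 2) :=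
        mul_nonneg hb (Real.rpow_nonneg (abs_nonneg b) _)
      show a * |a| ^ (q - 2) ≤ b * |b| ^ (q - 2)
      linarith

private lemma psi_bound {q : ℝ} (hq : 1 ≤ q) {a C : ℝ} (h : |a| ≤ C) :
    |a * |a| ^ (q - 2)| ≤ C ^ (q - 1) := by
  have hC : 0 ≤ C := le_trans (abs_nonneg a) h
  rcases eq_or_ne a 0 with rfl | ha
  · simpa using Real.rpow_nonneg hC (q - 1)
  · have habs : |a| ≠ 0 := abs_ne_zero.mpr ha
    have h2 : q - 2 + 1 = q - 1 := by ring
    have : |a * |a| ^ (q - 2)| = |a| ^ (q - 1) := by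
      rw [abs_mul, abs_of_nonneg (Real.rpow_nonneg (abs_nonneg a) _), mul_comm,
        ← Real.rpow_add_one habs, h2]
    rw [this]
    exact Real.rpow_le_rpow (abs_nonneg a) h (by linarith)

/-- Chebyshev's association inequality for "comonotone" random variables. -/
private lemma cheb {Ω : Type*} [MeasurableSpace Ω] (μ : Measure Ω) [IsProbabilityMeasure μ]
    {F G : Ω → ℝ} (hF : Integrable F μ) (hG : Integrable G μ)
    (hFG : Integrable (fun ω => F ω * G ω) μ)
    (h : ∀ ω ω', 0 ≤ (F ω - F ω') * (G ω - G ω')) :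
    (∫ ω, F ω ∂μ) * ∫ ω, G ω ∂μ ≤ ∫ ω, F ω * G ω ∂μ := by
  set ν := μ.prod μ with hν
  have h1 : Integrable (fun z : Ω × Ω => F z.1 * G z.2) ν := hF.mul_prod hG
  have h2 : Integrable (fun z : Ω × Ω => F z.2 * G z.1) ν :=
    (hG.mul_prod hF).congr (ae_of_all _ fun z => mul_comm _ _)
  have h3 : Integrable (fun z : Ω × Ω => F z.1 * G z.1) ν :=
    (hFG.mul_prod (integrable_const (1:ℝ))).congr (ae_of_all _ fun z => by simp)
  have h4 : Integrable (fun z : Ω × Ω => F z.2 * G z.2) ν :=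
    ((integrable_const (1:ℝ)).mul_prod hFG).congr (ae_of_all _ fun z => by simp)
  have key : 0 ≤ ∫ z, (F z.1 - F z.2) * (G z.1 - G z.2) ∂ν :=
    integral_nonneg fun z => h z.1 z.2
  have efn : (fun z : Ω × Ω => (F z.1 - F z.2) * (G z.1 - G z.2))
      = fun z => F z.1 * G z.1 - F z.1 * G z.2 - F z.2 * G z.1 + F z.2 * G z.2 := by
    funext z; ring
  rw [efn] at key
  have hA : Integrable (fun z : Ω × Ω => F z.1 * G z.1 - F z.1 * G z.2) ν := h3.sub h1
  have tA : ∫ z : Ω × Ω, (F z.1 * G z.1 - F z.1 * G z.2) ∂ν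
      = (∫ z : Ω × Ω, F z.1 * G z.1 ∂ν) - ∫ z : Ω × Ω, F z.1 * G z.2 ∂ν := integral_sub h3 h1
  have hB : Integrable (fun z : Ω × Ω => F z.1 * G z.1 - F z.1 * G z.2 - F z.2 * G z.1) ν :=
    hA.sub h2
  have tB : ∫ z : Ω × Ω, (F z.1 * G z.1 - F z.1 * G z.2 - F z.2 * G z.1) ∂ν
      = (∫ z : Ω × Ω, (F z.1 * G z.1 - F z.1 * G z.2) ∂ν) - ∫ z : Ω × Ω, F z.2 * G z.1 ∂ν :=
    integral_sub hA h2
  have tC : ∫ z : Ω × Ω, (F z.1 * G z.1 - F z.1 * G z.2 - F z.2 * G z.1 + F z.2 * G z.2) ∂ν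
      = (∫ z : Ω × Ω, (F z.1 * G z.1 - F z.1 * G z.2 - F z.2 * G z.1) ∂ν)
        + ∫ z : Ω × Ω, F z.2 * G z.2 ∂ν := integral_add hB h4
  have e1 : ∫ z : Ω × Ω, F z.1 * G z.2 ∂ν = (∫ ω, F ω ∂μ) * ∫ ω, G ω ∂μ :=
    integral_prod_mul F G
  have e2 : ∫ z : Ω × Ω, F z.2 * G z.1 ∂ν = (∫ ω, F ω ∂μ) * ∫ ω, G ω ∂μ := by
    rw [show (fun z : Ω × Ω => F z.2 * G z.1) = fun z => G z.1 * F z.2 from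
      funext fun z => mul_comm _ _, integral_prod_mul G F]
    ring
  have e3 : ∫ z : Ω × Ω, F z.1 * G z.1 ∂ν = ∫ ω, F ω * G ω ∂μ := by
    rw [show (fun z : Ω × Ω => F z.1 * G z.1)
        = fun z => (fun ω => F ω * G ω) z.1 * (fun _ : Ω => (1:ℝ)) z.2 from
      funext fun z => by simp, integral_prod_mul (fun ω => F ω * G ω) (fun _ => (1:ℝ))]
    simp
  have e4 : ∫ z : Ω × Ω, F z.2 * G z.2 ∂ν = ∫ ω, F ω * G ω ∂μ := by
    rw [show (fun z : Ω × Ω => F z.2 * G z.2)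
        = fun z => (fun _ : Ω => (1:ℝ)) z.1 * (fun ω => F ω * G ω) z.2 from
      funext fun z => by simp, integral_prod_mul (fun _ => (1:ℝ)) (fun ω => F ω * G ω)]
    simp
  rw [tC, tB, tA, e1, e2, e3, e4] at key
  linarith

private lemma ae_abs_le_of_top {Ω : Type*} [MeasurableSpace Ω] {μ : Measure Ω} {f : Ω → ℝ}
    (hf : MemLp f ⊤ μ) : ∀ᵐ ω ∂μ, |f ω| ≤ (eLpNorm f ⊤ μ).toReal := by
  have h2 : eLpNorm f ⊤ μ = eLpNormEssSup f μ := eLpNorm_exponent_top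
  have hlt : eLpNormEssSup f μ ≠ ⊤ := by rw [← h2]; exact hf.2.ne
  filter_upwards [ae_le_eLpNormEssSup (f := f) (μ := μ)] with ω hω
  have := ENNReal.toReal_mono hlt hω
  rw [← Real.norm_eq_abs, h2]
  simpa [coe_nnnorm] using this

/-- The case `p = ∞`. -/
private lemma main_top {Ω : Type*} [MeasurableSpace Ω] (μ : Measure Ω) [IsProbabilityMeasure μ]
    (φ : ℝ → ℝ) (K : NNReal) (hφm : Monotone φ) (hφ_lip : LipschitzWith K φ)
    (f : Ω → ℝ) (hf : MemLp f ⊤ μ) :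
    eLpNorm (fun ω => φ (f ω) - ∫ ω, φ (f ω) ∂μ) ⊤ μ ≤
      (K : ℝ≥0∞) * eLpNorm (fun ω => f ω - ∫ ω, f ω ∂μ) ⊤ μ := by
  have hfm := hf.aestronglyMeasurable
  have hlipR : ∀ x y : ℝ, |φ x - φ y| ≤ K * |x - y| := by
    intro x y
    have := hφ_lip.dist_le_mul x y
    simpa [Real.dist_eq] using this
  set m := ∫ ω, f ω ∂μ with hm
  set c := ∫ ω, φ (f ω) ∂μ with hc
  have hgsm : AEStronglyMeasurable (fun ω => φ (f ω)) μ :=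
    hφ_lip.continuous.comp_aestronglyMeasurable hfm
  have hf_int : Integrable f μ := hf.integrable le_top
  have hCf := ae_abs_le_of_top hf
  set Cf := (eLpNorm f ⊤ μ).toReal with hCfdef
  have hg_int : Integrable (fun ω => φ (f ω)) μ := by
    refine Integrable.mono' (integrable_const (|φ 0| + K * Cf)) hgsm ?_
    filter_upwards [hCf] with ω hω
    have h1 : |φ (f ω) - φ 0| ≤ K * |f ω - 0| := hlipR _ _
    rw [Real.norm_eq_abs]
    have h2 : (K : ℝ) * |f ω - 0| ≤ K * Cf := by
      apply mul_le_mul_of_nonneg_left (by simpa using hω) K.2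
    calc |φ (f ω)| = |(φ (f ω) - φ 0) + φ 0| := by ring_nf
      _ ≤ |φ (f ω) - φ 0| + |φ 0| := abs_add_le _ _
      _ ≤ |φ 0| + K * Cf := by linarith
  have hD_top : MemLp (fun ω => f ω - m) ⊤ μ := hf.sub (memLp_const m)
  set Cd := (eLpNorm (fun ω => f ω - m) ⊤ μ).toReal with hCddef
  have hCd : ∀ᵐ ω ∂μ, |f ω - m| ≤ Cd := ae_abs_le_of_top hD_top
  have hup : φ (m + Cd) - c ≤ K * Cd := by
    have hmono : ∀ᵐ ω' ∂μ, φ (m + Cd) - φ (f ω') ≤ (K : ℝ) * ((m + Cd) - f ω') := by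
      filter_upwards [hCd] with ω' hω'
      have h1 : f ω' ≤ m + Cd := by cases abs_le.mp hω'; linarith
      have h3 : |m + Cd - f ω'| = m + Cd - f ω' := abs_of_nonneg (by linarith)
      calc φ (m + Cd) - φ (f ω') ≤ |φ (m + Cd) - φ (f ω')| := le_abs_self _
        _ ≤ K * |m + Cd - f ω'| := hlipR _ _
        _ = (K : ℝ) * ((m + Cd) - f ω') := by rw [h3]
    have hint1 : Integrable (fun ω' => φ (m + Cd) - φ (f ω')) μ :=
      (integrable_const _).sub hg_int
    have hint2 : Integrable (fun ω' => (K : ℝ) * ((m + Cd) - f ω')) μ :=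
      ((integrable_const _).sub hf_int).const_mul _
    have hmono2 := integral_mono_ae hint1 hint2 hmono
    have e1 : ∫ ω', (φ (m + Cd) - φ (f ω')) ∂μ = φ (m + Cd) - c := by
      rw [integral_sub (integrable_const _) hg_int, integral_const]; simp [hc]
    have e2 : ∫ ω', (K : ℝ) * ((m + Cd) - f ω') ∂μ = K * Cd := by
      rw [integral_const_mul, integral_sub (integrable_const _) hf_int, integral_const]
      simp [hm]
    rw [e1, e2] at hmono2
    exact hmono2
  have hlo : c - φ (m - Cd) ≤ K * Cd := by
    have hmono : ∀ᵐ ω' ∂μ, φ (f ω') - φ (m - Cd) ≤ (K : ℝ) * (f ω' - (m - Cd)) := by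
      filter_upwards [hCd] with ω' hω'
      have h1 : m - Cd ≤ f ω' := by cases abs_le.mp hω'; linarith
      have h3 : |f ω' - (m - Cd)| = f ω' - (m - Cd) := abs_of_nonneg (by linarith)
      calc φ (f ω') - φ (m - Cd) ≤ |φ (f ω') - φ (m - Cd)| := le_abs_self _
        _ ≤ K * |f ω' - (m - Cd)| := hlipR _ _
        _ = (K : ℝ) * (f ω' - (m - Cd)) := by rw [h3]
    have hint1 : Integrable (fun ω' => φ (f ω') - φ (m - Cd)) μ :=
      hg_int.sub (integrable_const _)
    have hint2 : Integrable (fun ω' => (K : ℝ) * (f ω' - (m - Cd))) μ :=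
      (hf_int.sub (integrable_const _)).const_mul _
    have hmono2 := integral_mono_ae hint1 hint2 hmono
    have e1 : ∫ ω', (φ (f ω') - φ (m - Cd)) ∂μ = c - φ (m - Cd) := by
      rw [integral_sub hg_int (integrable_const _), integral_const]; simp [hc]
    have e2 : ∫ ω', (K : ℝ) * (f ω' - (m - Cd)) ∂μ = K * Cd := by
      rw [integral_const_mul, integral_sub hf_int (integrable_const _), integral_const]
      simp [hm]
    rw [e1, e2] at hmono2
    exact hmono2
  have hbd : ∀ᵐ ω ∂μ, ‖φ (f ω) - c‖ ≤ K * Cd := by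
    filter_upwards [hCd] with ω hω
    obtain ⟨hl, hr⟩ := abs_le.mp hω
    have h1 : φ (f ω) ≤ φ (m + Cd) := hφm (by linarith)
    have h2 : φ (m - Cd) ≤ φ (f ω) := hφm (by linarith)
    rw [Real.norm_eq_abs, abs_le]
    constructor <;> linarith
  have hfinal := eLpNorm_le_of_ae_bound (p := ⊤) (μ := μ) hbd
  have hCd0 : 0 ≤ Cd := ENNReal.toReal_nonneg
  calc eLpNorm (fun ω => φ (f ω) - c) ⊤ μ
      ≤ μ Set.univ ^ (⊤ : ℝ≥0∞).toReal⁻¹ * ENNReal.ofReal (K * Cd) := hfinal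
    _ = ENNReal.ofReal ((K : ℝ) * Cd) := by simp
    _ = (K : ℝ≥0∞) * ENNReal.ofReal Cd := by
        rw [ENNReal.ofReal_mul (by positivity : (0:ℝ) ≤ (K:ℝ)), ENNReal.ofReal_coe_nnreal]
    _ = (K : ℝ≥0∞) * eLpNorm (fun ω => f ω - m) ⊤ μ := by
        rw [hCddef, ENNReal.ofReal_toReal hD_top.2.ne]

/-- The case `p < ∞`. -/
private lemma main_fin {Ω : Type*} [MeasurableSpace Ω] (μ : Measure Ω) [IsProbabilityMeasure μ]
    (p : ℝ≥0∞) (hp : 1 ≤ p) (hptop : p ≠ ⊤) (φ : ℝ → ℝ) (K : NNReal)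
    (hφm : Monotone φ) (hφ_lip : LipschitzWith K φ)
    (f : Ω → ℝ) (hf : MemLp f ⊤ μ) :
    eLpNorm (fun ω => φ (f ω) - ∫ ω, φ (f ω) ∂μ) p μ ≤
      (K : ℝ≥0∞) * eLpNorm (fun ω => f ω - ∫ ω, f ω ∂μ) p μ := by
  have hfm := hf.aestronglyMeasurable
  have hq : 1 ≤ p.toReal := by
    rw [← ENNReal.toReal_one]
    exact ENNReal.toReal_mono hptop hp
  set q := p.toReal with hqdef
  have hq0 : (0:ℝ) ≤ q := by linarith
  have hp0 : p ≠ 0 := by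
    intro h; rw [h] at hp; exact absurd hp (by simp)
  have hlipR : ∀ x y : ℝ, |φ x - φ y| ≤ K * |x - y| := by
    intro x y
    have := hφ_lip.dist_le_mul x y
    simpa [Real.dist_eq] using this
  set m := ∫ ω, f ω ∂μ with hm
  set c := ∫ ω, φ (f ω) ∂μ with hc
  have hgsm : AEStronglyMeasurable (fun ω => φ (f ω)) μ :=
    hφ_lip.continuous.comp_aestronglyMeasurable hfm
  have hf_int : Integrable f μ := hf.integrable le_top
  have hCf := ae_abs_le_of_top hf
  set Cf := (eLpNorm f ⊤ μ).toReal with hCfdef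
  have hCf0 : 0 ≤ Cf := ENNReal.toReal_nonneg
  have habs_g : ∀ ω, |f ω| ≤ Cf → |φ (f ω)| ≤ |φ 0| + K * Cf := by
    intro ω hω
    have h1 : |φ (f ω) - φ 0| ≤ K * |f ω - 0| := hlipR _ _
    have h2 : (K : ℝ) * |f ω - 0| ≤ K * Cf :=
      mul_le_mul_of_nonneg_left (by simpa using hω) K.2
    calc |φ (f ω)| = |(φ (f ω) - φ 0) + φ 0| := by ring_nf
      _ ≤ |φ (f ω) - φ 0| + |φ 0| := abs_add_le _ _
      _ ≤ |φ 0| + K * Cf := by linarith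
  have hg_int : Integrable (fun ω => φ (f ω)) μ := by
    refine Integrable.mono' (integrable_const (|φ 0| + K * Cf)) hgsm ?_
    filter_upwards [hCf] with ω hω
    simpa [Real.norm_eq_abs] using habs_g ω hω
  have hg_top : MemLp (fun ω => φ (f ω)) ⊤ μ := by
    refine memLp_top_of_bound hgsm (|φ 0| + K * Cf) ?_
    filter_upwards [hCf] with ω hω
    simpa [Real.norm_eq_abs] using habs_g ω hω
  set A : Ω → ℝ := fun ω => φ (f ω) - c with hA
  set v : Ω → ℝ := fun ω => ((K : ℝ) * f ω - φ (f ω)) - ((K : ℝ) * m - c) with hv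
  set u : Ω → ℝ := fun ω => q * (A ω * |A ω| ^ (q - 2)) with hu
  have hAsm : AEStronglyMeasurable A μ := hgsm.sub aestronglyMeasurable_const
  have hA_top : MemLp A ⊤ μ := hg_top.sub (memLp_const c)
  have hD_top : MemLp (fun ω => f ω - m) ⊤ μ := hf.sub (memLp_const m)
  have hA_p : MemLp A p μ := hA_top.mono_exponent le_top
  have hD_p : MemLp (fun ω => f ω - m) p μ := hD_top.mono_exponent le_top
  have hDK_p : MemLp (fun ω => (K : ℝ) * (f ω - m)) p μ := hD_p.const_mul (K : ℝ)
  set Ca : ℝ := |φ 0| + K * Cf + |c| with hCa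
  have hCa0 : 0 ≤ Ca := by positivity
  have hAbd : ∀ᵐ ω ∂μ, |A ω| ≤ Ca := by
    filter_upwards [hCf] with ω hω
    have h1 := habs_g ω hω
    have h2 : |φ (f ω) - c| ≤ |φ (f ω)| + |c| := by
      rw [sub_eq_add_neg]
      exact (abs_add_le _ _).trans (by rw [abs_neg])
    calc |A ω| = |φ (f ω) - c| := rfl
      _ ≤ Ca := by rw [hCa]; linarith
  have mpsi : Measurable fun a : ℝ => a * |a| ^ (q - 2) := (psi_mono hq).measurable
  have hUsm : AEStronglyMeasurable u μ := by
    have h1 : AEMeasurable (fun ω => A ω * |A ω| ^ (q - 2)) μ :=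
      mpsi.comp_aemeasurable hAsm.aemeasurable
    exact (h1.const_mul q).aestronglyMeasurable
  have hUbd : ∀ᵐ ω ∂μ, ‖u ω‖ ≤ q * Ca ^ (q - 1) := by
    filter_upwards [hAbd] with ω hω
    have h1 := psi_bound hq hω
    calc ‖u ω‖ = |q| * |A ω * |A ω| ^ (q - 2)| := by rw [Real.norm_eq_abs, hu, abs_mul]
      _ = q * |A ω * |A ω| ^ (q - 2)| := by rw [abs_of_nonneg hq0]
      _ ≤ q * Ca ^ (q - 1) := mul_le_mul_of_nonneg_left h1 hq0
  have hu_int : Integrable u μ := Integrable.mono' (integrable_const _) hUsm hUbd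
  have hVsm : AEStronglyMeasurable v μ :=
    ((hfm.const_mul _).sub hgsm).sub aestronglyMeasurable_const
  set Cv : ℝ := K * Cf + (|φ 0| + K * Cf) + |(K : ℝ) * m - c| with hCv
  have hVbd : ∀ᵐ ω ∂μ, ‖v ω‖ ≤ Cv := by
    filter_upwards [hCf] with ω hω
    have h1 := habs_g ω hω
    have h2 : |(K : ℝ) * f ω| ≤ K * Cf := by
      rw [abs_mul, abs_of_nonneg (by positivity : (0:ℝ) ≤ (K:ℝ))]
      exact mul_le_mul_of_nonneg_left hω K.2
    have h3 : |v ω| ≤ |(K : ℝ) * f ω| + |φ (f ω)| + |(K : ℝ) * m - c| := by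
      rw [hv]
      have := abs_sub (((K : ℝ) * f ω - φ (f ω))) (((K : ℝ) * m - c))
      calc |(K : ℝ) * f ω - φ (f ω) - ((K : ℝ) * m - c)|
          ≤ |(K : ℝ) * f ω - φ (f ω)| + |(K : ℝ) * m - c| := by
            rw [sub_eq_add_neg]
            exact (abs_add_le _ _).trans (by rw [abs_neg])
        _ ≤ |(K : ℝ) * f ω| + |φ (f ω)| + |(K : ℝ) * m - c| := by
            have : |(K : ℝ) * f ω - φ (f ω)| ≤ |(K : ℝ) * f ω| + |φ (f ω)| := by
              rw [sub_eq_add_neg]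
              exact (abs_add_le _ _).trans (by rw [abs_neg])
            linarith
    rw [Real.norm_eq_abs]
    rw [hCv]; linarith
  have hv_int : Integrable v μ := Integrable.mono' (integrable_const _) hVsm hVbd
  have huv_int : Integrable (fun ω => u ω * v ω) μ := by
    refine Integrable.mono' (integrable_const ((q * Ca ^ (q - 1)) * Cv)) (hUsm.mul hVsm) ?_
    filter_upwards [hUbd, hVbd] with ω h1 h2
    rw [norm_mul]
    exact mul_le_mul h1 h2 (norm_nonneg _) (by positivity)
  have hAq_int : Integrable (fun ω => |A ω| ^ q) μ := by
    have hmeas : AEStronglyMeasurable (fun ω => |A ω| ^ q) μ := by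
      have : Continuous fun a : ℝ => |a| ^ q :=
        (Real.continuous_rpow_const hq0).comp continuous_abs
      exact this.comp_aestronglyMeasurable hAsm
    refine Integrable.mono' (integrable_const (Ca ^ q)) hmeas ?_
    filter_upwards [hAbd] with ω hω
    rw [Real.norm_eq_abs, abs_of_nonneg (Real.rpow_nonneg (abs_nonneg _) _)]
    exact Real.rpow_le_rpow (abs_nonneg _) hω hq0
  have hDbd : ∀ᵐ ω ∂μ, |(K : ℝ) * (f ω - m)| ≤ K * (Cf + |m|) := by
    filter_upwards [hCf] with ω hω
    rw [abs_mul, abs_of_nonneg (by positivity : (0:ℝ) ≤ (K:ℝ))]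
    apply mul_le_mul_of_nonneg_left _ K.2
    calc |f ω - m| ≤ |f ω| + |m| := by
          rw [sub_eq_add_neg]
          exact (abs_add_le _ _).trans (by rw [abs_neg])
      _ ≤ Cf + |m| := by linarith
  have hDKq_int : Integrable (fun ω => |(K : ℝ) * (f ω - m)| ^ q) μ := by
    have hmeas : AEStronglyMeasurable (fun ω => |(K : ℝ) * (f ω - m)| ^ q) μ := by
      have hcont : Continuous fun a : ℝ => |a| ^ q :=
        (Real.continuous_rpow_const hq0).comp continuous_abs
      exact hcont.comp_aestronglyMeasurable ((hfm.sub aestronglyMeasurable_const).const_mul _)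
    refine Integrable.mono' (integrable_const ((K * (Cf + |m|)) ^ q)) hmeas ?_
    filter_upwards [hDbd] with ω hω
    rw [Real.norm_eq_abs, abs_of_nonneg (Real.rpow_nonneg (abs_nonneg _) _)]
    exact Real.rpow_le_rpow (abs_nonneg _) hω hq0
  have hpt : ∀ ω, |A ω| ^ q + u ω * v ω ≤ |(K : ℝ) * (f ω - m)| ^ q := by
    intro ω
    have ht := tangent hq (A ω) ((K : ℝ) * (f ω - m))
    have he : u ω * v ω = q * (A ω * |A ω| ^ (q - 2)) * ((K : ℝ) * (f ω - m) - A ω) := by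
      simp only [hu, hv, hA]
      ring
    rw [he]
    exact ht
  have tadd : ∫ ω, (|A ω| ^ q + u ω * v ω) ∂μ
      = (∫ ω, |A ω| ^ q ∂μ) + ∫ ω, u ω * v ω ∂μ := integral_add hAq_int huv_int
  have tmono : ∫ ω, (|A ω| ^ q + u ω * v ω) ∂μ ≤ ∫ ω, |(K : ℝ) * (f ω - m)| ^ q ∂μ :=
    integral_mono (hAq_int.add huv_int) hDKq_int hpt
  have hvmean : ∫ ω, v ω ∂μ = 0 := by
    have i1 : ∫ ω, ((K : ℝ) * f ω - φ (f ω)) ∂μ = (K : ℝ) * m - c := by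
      rw [integral_sub (hf_int.const_mul _) hg_int, integral_const_mul]
    have isub : Integrable (fun ω => (K : ℝ) * f ω - φ (f ω)) μ :=
      (hf_int.const_mul _).sub hg_int
    calc ∫ ω, v ω ∂μ = ∫ ω, (((K : ℝ) * f ω - φ (f ω)) - ((K : ℝ) * m - c)) ∂μ := rfl
      _ = ((K : ℝ) * m - c) - ((K : ℝ) * m - c) := by
          rw [integral_sub isub (integrable_const _), i1, integral_const]
          simp
      _ = 0 := sub_self _
  have hmonovary : ∀ ω ω', 0 ≤ (u ω - u ω') * (v ω - v ω') := by
    have husign : ∀ a b : Ω, f a ≤ f b → u a ≤ u b := by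
      intro a b hab
      have h1 : A a ≤ A b := sub_le_sub_right (hφm hab) c
      exact mul_le_mul_of_nonneg_left (psi_mono hq h1) hq0
    have hvsign : ∀ a b : Ω, f a ≤ f b → v a ≤ v b := by
      intro a b hab
      have h2 := (abs_le.mp (hlipR (f b) (f a))).2
      have h3 : |f b - f a| = f b - f a := abs_of_nonneg (by linarith)
      rw [h3] at h2
      show ((K : ℝ) * f a - φ (f a)) - ((K : ℝ) * m - c)
          ≤ ((K : ℝ) * f b - φ (f b)) - ((K : ℝ) * m - c)
      linarith
    intro ω ω'
    rcases le_total (f ω) (f ω') with h | h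
    · have h1 := husign ω ω' h
      have h2 := hvsign ω ω' h
      nlinarith
    · have h1 := husign ω' ω h
      have h2 := hvsign ω' ω h
      nlinarith
  have hcheb := cheb μ hu_int hv_int huv_int hmonovary
  rw [hvmean, mul_zero] at hcheb
  have core : ∫ ω, |A ω| ^ q ∂μ ≤ ∫ ω, |(K : ℝ) * (f ω - m)| ^ q ∂μ := by
    rw [tadd] at tmono
    linarith
  have eA := hA_p.eLpNorm_eq_integral_rpow_norm hp0 hptop
  have eKD := hDK_p.eLpNorm_eq_integral_rpow_norm hp0 hptop
  simp only [Real.norm_eq_abs, ← hqdef] at eA eKD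
  have le1 : eLpNorm A p μ ≤ eLpNorm (fun ω => (K : ℝ) * (f ω - m)) p μ := by
    rw [eA, eKD]
    apply ENNReal.ofReal_le_ofReal
    exact Real.rpow_le_rpow
      (integral_nonneg fun ω => Real.rpow_nonneg (abs_nonneg _) _) core
      (inv_nonneg.2 hq0)
  have le2 : eLpNorm (fun ω => (K : ℝ) * (f ω - m)) p μ
      = (K : ℝ≥0∞) * eLpNorm (fun ω => f ω - m) p μ := by
    have hfun : (fun ω => (K : ℝ) * (f ω - m)) = (K : ℝ) • (fun ω => f ω - m) := rfl
    rw [hfun, eLpNorm_const_smul]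
    simp [NNReal.nnnorm_eq, ENNReal.smul_def]
  exact le1.trans (le_of_eq le2)

/-- Theorem 3: for a monotone Lipschitz `φ` and real `f ∈ L^∞(Ω,μ)` over a
probability space, `‖φ∘f − E(φ∘f)‖_p ≤ Lip(φ)·‖f − Ef‖_p`. -/
theorem chain_rule_random_variables
    {Ω : Type*} [MeasurableSpace Ω] (μ : Measure Ω) [IsProbabilityMeasure μ]
    (p : ℝ≥0∞) (hp : 1 ≤ p)
    (φ : ℝ → ℝ) (K : NNReal)
    (hφ_mono : Monotone φ ∨ Antitone φ) (hφ_lip : LipschitzWith K φ)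
    (f : Ω → ℝ) (hf : MemLp f ⊤ μ) :
    eLpNorm (fun ω => φ (f ω) - ∫ ω, φ (f ω) ∂μ) p μ ≤
      (K : ℝ≥0∞) * eLpNorm (fun ω => f ω - ∫ ω, f ω ∂μ) p μ := by
  have main : ∀ ψ : ℝ → ℝ, Monotone ψ → LipschitzWith K ψ →
      eLpNorm (fun ω => ψ (f ω) - ∫ ω, ψ (f ω) ∂μ) p μ ≤
        (K : ℝ≥0∞) * eLpNorm (fun ω => f ω - ∫ ω, f ω ∂μ) p μ := by
    intro ψ hm hl
    by_cases hptop : p = ⊤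
    · subst hptop
      exact main_top μ ψ K hm hl f hf
    · exact main_fin μ p hp hptop ψ K hm hl f hf
  rcases hφ_mono with hmono | hanti
  · exact main φ hmono hφ_lip
  · have hneg_lip : LipschitzWith K (fun x => -φ x) := by
      intro x y
      simpa [edist_neg_neg] using hφ_lip x y
    have hneg_mono : Monotone (fun x => -φ x) := fun a b hab => neg_le_neg (hanti hab)
    have h := main (fun x => -φ x) hneg_mono hneg_lip
    have hfun : (fun ω => -φ (f ω) - ∫ ω, -φ (f ω) ∂μ)
        = fun ω => -(φ (f ω) - ∫ ω, φ (f ω) ∂μ) := by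
      funext ω
      rw [integral_neg]
      ring
    rw [hfun] at h
    have hen : eLpNorm (fun ω => -(φ (f ω) - ∫ ω, φ (f ω) ∂μ)) p μ
        = eLpNorm (fun ω => φ (f ω) - ∫ ω, φ (f ω) ∂μ) p μ :=
      eLpNorm_neg _ _ _
    rwa [hen] at h
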